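/- Let T, X, B ∈ ℚ[[t]] with T = 1 + tT^3, B = tT^2, X = B(1+X+X^2), and let T(u) ∈ ℚ[[t,u]] satisfy T(u) = 1 + tuT(u)^2T with constant term 1. Define H_0(u) = (1-X)·X·T(u) - (1+X)(1-X^2) and H_{-1}(u) = -(1+X)(1-X). Then T(u)·(H_0(u)/H_{-1}(u))·((1-X^2)/(1-X^3)) = T(u)·(1+B) - T(u)^2·B. -/

import Mathlib

/-- The ring `ℚ[[t,u]]`, realized as `ℚ[[t]][[u]]`. -/
abbrev QTU : Type := PowerSeries (PowerSeries ℚ)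

/-- The image of a series of `ℚ[[t]]` in `ℚ[[t,u]]`. -/
noncomputable def liftT (f : PowerSeries ℚ) : QTU := PowerSeries.C f

/-- The variable `t` in `ℚ[[t,u]]`. -/
noncomputable def tVar : QTU := liftT PowerSeries.X

/-- The variable `u` in `ℚ[[t,u]]`. -/
noncomputable def uVar : QTU := PowerSeries.X

/-- With `T = 1 + tT^3`, `B = tT^2`, `X = B(1+X+X^2)` in `ℚ[[t]]`, and
`T(u) = 1 + tuT(u)^2T` in `ℚ[[t,u]]` (constant term 1),
`H_0(u) = (1-X)XT(u) - (1+X)(1-X^2)` and `H_{-1}(u) = -(1+X)(1-X)`, we have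
`T(u)·(H_0(u)/H_{-1}(u))·((1-X^2)/(1-X^3)) = T(u)(1+B) - T(u)^2·B`,
stated multiplicatively as `T(u)·H_0(u)·(1-X^2) = (T(u)(1+B) - T(u)^2·B)·H_{-1}(u)·(1-X^3)`
(the cleared factors are invertible). -/
theorem core_series_equals_fin_series (T B Xs : PowerSeries ℚ)
    (hT0 : PowerSeries.constantCoeff T = 1)
    (hT : T = 1 + PowerSeries.X * T ^ 3)
    (hB : B = PowerSeries.X * T ^ 2)
    (hXs0 : PowerSeries.constantCoeff Xs = 0)
    (hXs : Xs = B * (1 + Xs + Xs ^ 2))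
    (Tu : QTU)
    (hTu0 : PowerSeries.constantCoeff (PowerSeries.constantCoeff Tu) = 1)
    (hTu : Tu = 1 + tVar * uVar * Tu ^ 2 * liftT T) :
    Tu * ((1 - liftT Xs) * liftT Xs * Tu - (1 + liftT Xs) * (1 - liftT (Xs ^ 2)))
        * (1 - liftT (Xs ^ 2))
      = (Tu * (1 + liftT B) - Tu ^ 2 * liftT B)
        * (-(1 + liftT Xs) * (1 - liftT Xs)) * (1 - liftT (Xs ^ 3)) := by
  have h := congrArg liftT hXs
  simp only [liftT, map_mul, map_add, map_pow, map_one] at h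
  have h2 : liftT (Xs ^ 2) = (liftT Xs) ^ 2 := by simp [liftT, map_pow]
  have h3 : liftT (Xs ^ 3) = (liftT Xs) ^ 3 := by simp [liftT, map_pow]
  rw [h2, h3]
  simp only [liftT]
  linear_combination ((1 - PowerSeries.C Xs) ^ 2 * (1 + PowerSeries.C Xs) * (Tu ^ 2 - Tu)) * h
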